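/- Let V be a finite set partitioned as V = U ⊔ C ⊔ H, and let A be a V×V matrix with nonnegative real entries such that A(v,u) = 0 whenever v ∈ C ∪ H and u ∈ U, and A(h,c) = 0 whenever h ∈ H and c ∈ C (so A is block upper triangular for the ordering U, C, H). Assume the C×C block A_C of A is irreducible, i.e. for all v,w ∈ C there is m ≥ 1 with (A_C^m)(v,w) > 0. Suppose m : V → ℝ is a vector with nonnegative entries satisfying (A·m)_v ≤ ρ(A_C)·m_v for every v ∈ V, where ρ(A_C) is the spectral radius of A_C. If w ∈ H and there exist v ∈ C and n ≥ 1 with (A^n)(v,w) > 0, then m_w = 0. -/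
import Mathlib
open Matrix

noncomputable def specRad {n : Type*} [Fintype n] [DecidableEq n] (M : Matrix n n ℝ) : ℝ :=
  (spectralRadius ℂ (M.map Complex.ofReal)).toReal

lemma specRad_nonneg {n : Type*} [Fintype n] [DecidableEq n] (M : Matrix n n ℝ) :
    0 ≤ specRad M := ENNReal.toReal_nonneg

lemma specRad_le_of_mulVec_le {n : Type*} [Fintype n] [DecidableEq n] [Nonempty n]
    (B : Matrix n n ℝ) (hB : ∀ i j, 0 ≤ B i j) (z : n → ℝ) (hz : ∀ i, 0 < z i)
    (t : ℝ) (h : ∀ i, B.mulVec z i ≤ t * z i) : specRad B ≤ t := by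
  obtain ⟨i0⟩ := ‹Nonempty n›
  have ht : 0 ≤ t := by
    have h1 : 0 ≤ B.mulVec z i0 := Finset.sum_nonneg fun j _ =>
      mul_nonneg (hB i0 j) (hz j).le
    nlinarith [h i0, hz i0]
  have key : ∀ μ ∈ spectrum ℂ (B.map Complex.ofReal), ‖μ‖ ≤ t := by
    intro μ hμ
    rw [← AlgEquiv.spectrum_eq (Matrix.toLinAlgEquiv' (R := ℂ) (n := n))] at hμ
    have hev := Module.End.hasEigenvalue_iff_mem_spectrum.mpr hμ
    obtain ⟨x, hx⟩ := hev.exists_hasEigenvector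
    have hxe : (B.map Complex.ofReal).mulVec x = μ • x := by
      have := hx.apply_eq_smul
      simpa [Matrix.toLinAlgEquiv'_apply] using this
    obtain ⟨i, -, hi⟩ := Finset.exists_max_image Finset.univ (fun j => ‖x j‖ / z j)
      ⟨i0, Finset.mem_univ i0⟩
    set c := ‖x i‖ / z i with hc
    have hcz : ∀ j, ‖x j‖ ≤ c * z j := fun j =>
      (div_le_iff₀ (hz j)).mp (hi j (Finset.mem_univ j))
    have hxi : ‖x i‖ = c * z i := by
      rw [hc, div_mul_cancel₀ _ (hz i).ne']
    -- c > 0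
    have hcpos : 0 < c := by
      obtain ⟨j, hj⟩ := Function.ne_iff.mp hx.right
      have : 0 < ‖x j‖ / z j := div_pos (norm_pos_iff.mpr hj) (hz j)
      exact lt_of_lt_of_le this (hi j (Finset.mem_univ j))
    have hxipos : 0 < ‖x i‖ := by rw [hxi]; exact mul_pos hcpos (hz i)
    -- main estimate
    have hmain : ‖μ‖ * ‖x i‖ ≤ t * ‖x i‖ := by
      have h1 : ‖μ‖ * ‖x i‖ = ‖(B.map Complex.ofReal).mulVec x i‖ := by
        rw [hxe]; simp [norm_smul]
      have h2' : (B.map Complex.ofReal).mulVec x i = ∑ j, (B i j : ℂ) * x j := by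
        simp [Matrix.mulVec, dotProduct, Matrix.map_apply]
      have h2 : ‖(B.map Complex.ofReal).mulVec x i‖ ≤ ∑ j, B i j * ‖x j‖ := by
        rw [h2']
        refine (norm_sum_le _ _).trans (le_of_eq ?_)
        exact Finset.sum_congr rfl fun j _ => by
          rw [norm_mul, Complex.norm_real, Real.norm_of_nonneg (hB i j)]
      have h3 : ∑ j, B i j * ‖x j‖ ≤ ∑ j, B i j * (c * z j) :=
        Finset.sum_le_sum fun j _ => mul_le_mul_of_nonneg_left (hcz j) (hB i j)
      have h4 : ∑ j, B i j * (c * z j) = c * B.mulVec z i := by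
        simp only [Matrix.mulVec, dotProduct, Finset.mul_sum]
        exact Finset.sum_congr rfl fun j _ => by ring
      have h5 : c * B.mulVec z i ≤ c * (t * z i) :=
        mul_le_mul_of_nonneg_left (h i) hcpos.le
      rw [h1]
      calc ‖(B.map Complex.ofReal).mulVec x i‖ ≤ c * (t * z i) := by linarith
        _ = t * ‖x i‖ := by rw [hxi]; ring
    exact le_of_mul_le_mul_right hmain hxipos
  -- conclude
  have : spectralRadius ℂ (B.map Complex.ofReal) ≤ ENNReal.ofReal t := by
    rw [spectralRadius]
    refine iSup₂_le fun μ hμ => ?_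
    rw [ENNReal.ofReal, ENNReal.coe_le_coe, ← norm_toNNReal]
    exact Real.toNNReal_mono (key μ hμ)
  exact ENNReal.toReal_le_of_le_ofReal ht this

section Helpers
variable {ι : Type*} [Fintype ι] [DecidableEq ι]

lemma pow_entry_nonneg (N : Matrix ι ι ℝ) (hN : ∀ i j, 0 ≤ N i j) :
    ∀ k i j, 0 ≤ (N ^ k) i j := by
  intro k
  induction k with
  | zero => intro i j; simp [Matrix.one_apply]; split <;> norm_num
  | succ k ih =>
    intro i j
    rw [pow_succ, Matrix.mul_apply]
    exact Finset.sum_nonneg fun x _ => mul_nonneg (ih i x) (hN x j)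

lemma single_le_mulVec (N : Matrix ι ι ℝ) (hN : ∀ i j, 0 ≤ N i j)
    (x : ι → ℝ) (hx : ∀ j, 0 ≤ x j) (i j : ι) : N i j * x j ≤ N.mulVec x i :=
  Finset.single_le_sum (fun l _ => mul_nonneg (hN i l) (hx l)) (Finset.mem_univ j)

lemma mulVec_nonneg' (N : Matrix ι ι ℝ) (hN : ∀ i j, 0 ≤ N i j)
    (x : ι → ℝ) (hx : ∀ j, 0 ≤ x j) (i : ι) : 0 ≤ N.mulVec x i :=
  Finset.sum_nonneg fun l _ => mul_nonneg (hN i l) (hx l)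

lemma pow_mulVec_le (N : Matrix ι ι ℝ) (hN : ∀ i j, 0 ≤ N i j) (ρ : ℝ) (hρ : 0 ≤ ρ)
    (x : ι → ℝ) (hx : ∀ j, 0 ≤ x j) (hle : ∀ i, N.mulVec x i ≤ ρ * x i) :
    ∀ k i, (N ^ k).mulVec x i ≤ ρ ^ k * x i := by
  intro k
  induction k with
  | zero => intro i; simp [Matrix.mulVec_one]
  | succ k ih =>
    intro i
    rw [pow_succ', ← Matrix.mulVec_mulVec]
    calc N.mulVec ((N ^ k).mulVec x) i ≤ N.mulVec (fun j => ρ ^ k * x j) i := by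
          refine Finset.sum_le_sum fun l _ => mul_le_mul_of_nonneg_left (ih l) (hN i l)
      _ = ρ ^ k * N.mulVec x i := by
          simp [Matrix.mulVec, dotProduct, Finset.mul_sum]
          exact Finset.sum_congr rfl fun l _ => by ring
      _ ≤ ρ ^ k * (ρ * x i) := mul_le_mul_of_nonneg_left (hle i) (pow_nonneg hρ k)
      _ = ρ ^ (k + 1) * x i := by ring

end Helpers

theorem kms_vanishes_downstream {V : Type*} [Fintype V] [DecidableEq V]
    (U C H : Set V) [DecidablePred (· ∈ U)] [DecidablePred (· ∈ C)] [DecidablePred (· ∈ H)]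
    (hUC : Disjoint U C) (hUH : Disjoint U H) (hCH : Disjoint C H)
    (hcover : U ∪ C ∪ H = Set.univ)
    (A : Matrix V V ℝ)
    (hA : ∀ v w, 0 ≤ A v w)
    (hblock₁ : ∀ v ∈ C ∪ H, ∀ u ∈ U, A v u = 0)
    (hblock₂ : ∀ h ∈ H, ∀ c ∈ C, A h c = 0)
    (hirr : ∀ v w : C, ∃ m : ℕ, 1 ≤ m ∧
      0 < ((A.submatrix (Subtype.val : C → V) (Subtype.val : C → V)) ^ m) v w)
    (m : V → ℝ) (hm : ∀ v, 0 ≤ m v)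
    (hsub : ∀ v, A.mulVec m v ≤
      specRad (A.submatrix (Subtype.val : C → V) (Subtype.val : C → V)) * m v)
    (w : V) (hw : w ∈ H)
    (hpath : ∃ v ∈ C, ∃ n : ℕ, 1 ≤ n ∧ 0 < (A ^ n) v w) :
    m w = 0 := by
  obtain ⟨v₀, hv₀C, n, hn1, hAn⟩ := hpath
  set B := A.submatrix (Subtype.val : C → V) (Subtype.val : C → V) with hBdef
  set ρ := specRad B with hρdef
  have hρ0 : 0 ≤ ρ := ENNReal.toReal_nonneg
  have hBnn : ∀ i j : C, 0 ≤ B i j := fun i j => hA i j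
  have instNe : Nonempty C := ⟨⟨v₀, hv₀C⟩⟩
  set mc : ↥C → ℝ := fun c => m c with hmcdef
  have hmcnn : ∀ c : C, 0 ≤ mc c := fun c => hm c
  -- splitting the full sum
  have hsplit : ∀ v : C, A.mulVec m (v : V) =
      B.mulVec mc v + ∑ x ∈ Finset.univ \ C.toFinset, A (v : V) x * m x := by
    intro v
    have h1 : B.mulVec mc v = ∑ x ∈ C.toFinset, A (v : V) x * m x := by
      rw [Matrix.mulVec, dotProduct]
      exact Finset.sum_set_coe (s := C) (f := fun x => A (v : V) x * m x)
    rw [h1, Matrix.mulVec, dotProduct,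
      ← Finset.sum_sdiff (Finset.subset_univ C.toFinset)]
    ring
  -- K1 : no weight flows from C outside C
  have K1 : ∀ v ∈ C, ∀ h ∉ C, A v h * m h = 0 := by
    intro va hvaC h hhC
    by_contra hne
    have hpos : 0 < A va h * m h :=
      lt_of_le_of_ne (mul_nonneg (hA va h) (hm h)) (Ne.symm hne)
    set va' : C := ⟨va, hvaC⟩ with hva'
    -- slack vector
    set y : ↥C → ℝ := fun c => ρ * mc c - B.mulVec mc c with hydef
    have houter : ∀ v : C, 0 ≤ ∑ x ∈ Finset.univ \ C.toFinset, A (v : V) x * m x :=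
      fun v => Finset.sum_nonneg fun x _ => mul_nonneg (hA _ x) (hm x)
    have hy0 : ∀ c : C, 0 ≤ y c := by
      intro c
      have h1 : A.mulVec m (c : V) ≤ ρ * mc c := hsub (c : V)
      have h2 := hsplit c
      have h3 := houter c
      simp only [hydef]
      linarith
    have hBmc : ∀ c : C, B.mulVec mc c ≤ ρ * mc c := by
      intro c
      have h1 : A.mulVec m (c : V) ≤ ρ * mc c := hsub (c : V)
      have h2 := hsplit c
      have h3 := houter c
      linarith
    have hyva : 0 < y va' := by
      have hmem : h ∈ Finset.univ \ C.toFinset := by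
        simp [Finset.mem_sdiff, Set.mem_toFinset, hhC]
      have hsingle : A (va' : V) h * m h ≤ ∑ x ∈ Finset.univ \ C.toFinset, A ((va' : C) : V) x * m x :=
        Finset.single_le_sum (fun x _ => mul_nonneg (hA _ x) (hm x)) hmem
      have h1 : A.mulVec m ((va' : C) : V) ≤ ρ * mc va' := hsub ((va' : C) : V)
      have h2 := hsplit va'
      have h5 : 0 < A ((va' : C) : V) h * m h := hpos
      simp only [hydef]
      linarith
    -- mc is strictly positive
    have hmc_ne : ∃ c₀ : C, 0 < mc c₀ := by
      by_contra hall
      push_neg at hall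
      have hzero : ∀ c : C, mc c = 0 := fun c => le_antisymm (hall c) (hmcnn c)
      have h1 : ρ * m va = 0 := by
        rw [show m va = mc va' from rfl, hzero va', mul_zero]
      have h2 := hsub va
      have h3 : A va h * m h ≤ A.mulVec m va :=
        single_le_mulVec A hA m hm va h
      rw [h1] at h2
      linarith
    obtain ⟨c₀, hc₀⟩ := hmc_ne
    have hmcpos : ∀ c : C, 0 < mc c := by
      intro c
      rcases lt_or_eq_of_le (hmcnn c) with h' | h'
      · exact h'
      · exfalso
        obtain ⟨k, hk1, hkpos⟩ := hirr c c₀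
        have hle := pow_mulVec_le B hBnn ρ hρ0 mc hmcnn hBmc k c
        have hsingle : (B ^ k) c c₀ * mc c₀ ≤ (B ^ k).mulVec mc c :=
          single_le_mulVec (B ^ k) (pow_entry_nonneg B hBnn k) mc hmcnn c c₀
        have : 0 < (B ^ k) c c₀ * mc c₀ := mul_pos hkpos hc₀
        rw [← h'] at hle
        simp only [mul_zero] at hle
        linarith
    have hρpos : 0 < ρ := by
      obtain ⟨k, hk1, hkpos⟩ := hirr c₀ c₀
      have hle := pow_mulVec_le B hBnn ρ hρ0 mc hmcnn hBmc k c₀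
      have hsingle : (B ^ k) c₀ c₀ * mc c₀ ≤ (B ^ k).mulVec mc c₀ :=
        single_le_mulVec (B ^ k) (pow_entry_nonneg B hBnn k) mc hmcnn c₀ c₀
      have hpk : 0 < ρ ^ k * mc c₀ := lt_of_lt_of_le (mul_pos hkpos hc₀) (hsingle.trans hle)
      rcases lt_or_eq_of_le hρ0 with h' | h'
      · exact h'
      · exfalso
        rw [← h', zero_pow (by omega), zero_mul] at hpk
        exact lt_irrefl 0 hpk
    -- choose reachability exponents towards va'
    choose kf hkf1 hkf2 using fun c : C => hirr c va'
    set K := Finset.univ.sup kf with hKdef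
    have hkfK : ∀ c : C, kf c ≤ K := fun c => Finset.le_sup (Finset.mem_univ c)
    set q : ↥C → ℝ :=
      fun c => ∑ k ∈ Finset.range (K + 1), ρ ^ (K - k) * (B ^ k).mulVec mc c with hqdef
    set s : ↥C → ℝ :=
      fun c => ∑ k ∈ Finset.range (K + 1), ρ ^ (K - k) * (B ^ k).mulVec y c with hsdef
    have hBmc_eq : B.mulVec mc = fun c => ρ * mc c - y c := by
      funext c; simp only [hydef]; ring
    have hBq : ∀ c : C, B.mulVec q c = ρ * q c - s c := by
      intro c
      have hlin : B.mulVec q c =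
          ∑ k ∈ Finset.range (K + 1), ρ ^ (K - k) * (B.mulVec ((B ^ k).mulVec mc)) c := by
        have e1 : B.mulVec q c = ∑ j, B c j * q j := rfl
        rw [e1]
        simp only [hqdef, Finset.mul_sum]
        rw [Finset.sum_comm]
        refine Finset.sum_congr rfl fun k _ => ?_
        have e2 : (B.mulVec ((B ^ k).mulVec mc)) c = ∑ j, B c j * ((B ^ k).mulVec mc) j := rfl
        rw [e2, Finset.mul_sum]
        exact Finset.sum_congr rfl fun j _ => by ring
      rw [hlin]
      have hterm : ∀ k, B.mulVec ((B ^ k).mulVec mc) = fun c =>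
          ρ * (B ^ k).mulVec mc c - (B ^ k).mulVec y c := by
        intro k
        funext c'
        rw [Matrix.mulVec_mulVec, ← pow_succ', pow_succ, ← Matrix.mulVec_mulVec, hBmc_eq]
        have : (fun c => ρ * mc c - y c) = (ρ • mc) - y := by
          funext c; simp [Pi.smul_apply, Pi.sub_apply]
        rw [this, Matrix.mulVec_sub, Matrix.mulVec_smul]
        simp
      calc ∑ k ∈ Finset.range (K + 1), ρ ^ (K - k) * (B.mulVec ((B ^ k).mulVec mc)) c
          = ∑ k ∈ Finset.range (K + 1),
            (ρ * (ρ ^ (K - k) * (B ^ k).mulVec mc c) - ρ ^ (K - k) * (B ^ k).mulVec y c) := by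
            exact Finset.sum_congr rfl fun k _ => by rw [hterm k]; ring
        _ = ρ * q c - s c := by
            rw [Finset.sum_sub_distrib, ← Finset.mul_sum]
    -- positivity of q and s
    have hq : ∀ c : C, 0 < q c := by
      intro c
      have hnn : ∀ k ∈ Finset.range (K + 1), 0 ≤ ρ ^ (K - k) * (B ^ k).mulVec mc c :=
        fun k _ => mul_nonneg (pow_nonneg hρ0 _)
          (mulVec_nonneg' _ (pow_entry_nonneg B hBnn k) mc hmcnn c)
      have hle := Finset.single_le_sum hnn (Finset.mem_range.mpr (Nat.succ_pos K))
      have hpos0 : 0 < ρ ^ (K - 0) * (B ^ 0).mulVec mc c := by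
        rw [pow_zero, Matrix.one_mulVec]
        exact mul_pos (pow_pos hρpos _) (hmcpos c)
      simp only [hqdef]
      exact lt_of_lt_of_le hpos0 hle
    have hs : ∀ c : C, 0 < s c := by
      intro c
      have hnn : ∀ k ∈ Finset.range (K + 1), 0 ≤ ρ ^ (K - k) * (B ^ k).mulVec y c :=
        fun k _ => mul_nonneg (pow_nonneg hρ0 _)
          (mulVec_nonneg' _ (pow_entry_nonneg B hBnn k) y hy0 c)
      have hmem : kf c ∈ Finset.range (K + 1) :=
        Finset.mem_range.mpr (Nat.lt_succ_of_le (hkfK c))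
      have hle := Finset.single_le_sum hnn hmem
      have hsingle : (B ^ kf c) c va' * y va' ≤ (B ^ kf c).mulVec y c :=
        single_le_mulVec _ (pow_entry_nonneg B hBnn _) y hy0 c va'
      have hpos0 : 0 < ρ ^ (K - kf c) * (B ^ kf c).mulVec y c :=
        mul_pos (pow_pos hρpos _)
          (lt_of_lt_of_le (mul_pos (hkf2 c) hyva) hsingle)
      simp only [hsdef]
      exact lt_of_lt_of_le hpos0 hle
    -- minimum ratio and contradiction
    obtain ⟨cm, -, hcm⟩ := Finset.exists_min_image Finset.univ (fun c => s c / q c)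
      ⟨va', Finset.mem_univ va'⟩
    set ε := s cm / q cm with hεdef
    have hεpos : 0 < ε := div_pos (hs cm) (hq cm)
    have hqle : ∀ c : C, B.mulVec q c ≤ (ρ - ε) * q c := by
      intro c
      have h1 : ε ≤ s c / q c := hcm c (Finset.mem_univ c)
      have h2 : ε * q c ≤ s c := by
        rw [← div_mul_cancel₀ (s c) (hq c).ne']
        exact mul_le_mul_of_nonneg_right h1 (hq c).le
      have h3 : (ρ - ε) * q c = ρ * q c - ε * q c := by ring
      rw [hBq c, h3]
      linarith
    haveI : Nonempty (C : Set V) := instNe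
    have hcontr := specRad_le_of_mulVec_le B hBnn q hq (ρ - ε) hqle
    rw [← hρdef] at hcontr
    linarith
  -- K2 : zero weight propagates one step
  have K2 : ∀ x, m x = 0 → ∀ z, A x z * m z = 0 := by
    intro x hx z
    have h1 : A.mulVec m x ≤ 0 := by
      have := hsub x
      rw [hx, mul_zero] at this
      exact this
    have h2 : ∀ j ∈ Finset.univ, 0 ≤ A x j * m j := fun j _ => mul_nonneg (hA x j) (hm j)
    have h3 : ∑ j, A x j * m j = 0 := le_antisymm h1 (Finset.sum_nonneg h2)
    exact (Finset.sum_eq_zero_iff_of_nonneg h2).mp h3 z (Finset.mem_univ z)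
  -- powers of A never lead back into U
  have hUzero : ∀ k, ∀ v ∈ C ∪ H, ∀ u ∈ U, (A ^ k) v u = 0 := by
    intro k
    induction k with
    | zero =>
      intro v hv u hu
      have hne : v ≠ u := by
        rintro rfl
        cases hv with
        | inl h' => exact Set.disjoint_right.mp hUC h' hu
        | inr h' => exact Set.disjoint_right.mp hUH h' hu
      rw [pow_zero]
      exact Matrix.one_apply_ne hne
    | succ k ih =>
      intro v hv u hu
      rw [pow_succ, Matrix.mul_apply]
      refine Finset.sum_eq_zero fun x _ => ?_
      by_cases hxU : x ∈ U
      · rw [ih v hv x hxU, zero_mul]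
      · have hx' : x ∈ U ∪ C ∪ H := by
          rw [hcover]; exact Set.mem_univ x
        have hx : x ∈ C ∪ H := by
          rcases hx' with (h' | h') | h'
          · exact absurd h' hxU
          · exact Or.inl h'
          · exact Or.inr h'
        rw [hblock₁ x hx u hu, mul_zero]
  -- main induction on path length
  have main : ∀ k, ∀ v ∈ C, ∀ x ∈ H, 0 < (A ^ k) v x → m x = 0 := by
    intro k
    induction k with
    | zero =>
      intro v hv x hx hpos
      rw [pow_zero] at hpos
      have hvx : v = x := by
        by_contra hne
        rw [Matrix.one_apply_ne hne] at hpos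
        exact lt_irrefl 0 hpos
      subst hvx
      exact absurd hx (Set.disjoint_left.mp hCH hv)
    | succ k ih =>
      intro v hv x hx hpos
      rw [pow_succ, Matrix.mul_apply] at hpos
      have hex : ∃ z, 0 < (A ^ k) v z * A z x := by
        by_contra hall
        push_neg at hall
        have : ∑ z, (A ^ k) v z * A z x ≤ 0 := Finset.sum_nonpos fun z _ => hall z
        linarith
      obtain ⟨z, hz⟩ := hex
      have ha := pow_entry_nonneg A hA k v z
      have hb := hA z x
      have hz1 : 0 < (A ^ k) v z := by
        rcases ha.lt_or_eq with h' | h'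
        · exact h'
        · rw [← h', zero_mul] at hz; exact absurd hz (lt_irrefl 0)
      have hz2 : 0 < A z x := by
        rcases hb.lt_or_eq with h' | h'
        · exact h'
        · rw [← h', mul_zero] at hz; exact absurd hz (lt_irrefl 0)
      have hzmem : z ∈ U ∪ C ∪ H := by rw [hcover]; exact Set.mem_univ z
      rcases hzmem with (hzU | hzC) | hzH
      · rw [hUzero k v (Or.inl hv) z hzU] at hz1
        exact absurd hz1 (lt_irrefl 0)
      · have h0 := K1 z hzC x (Set.disjoint_right.mp hCH hx)
        exact (mul_eq_zero.mp h0).resolve_left hz2.ne'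
      · have hmz : m z = 0 := ih v hv z hzH hz1
        have h0 := K2 z hmz x
        exact (mul_eq_zero.mp h0).resolve_left hz2.ne'
  exact main n v₀ hv₀C w hw hAn
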